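/- Let n be a positive even integer. There exists a (n²/2, n, n−2, n+2) PDA, and every (n²/2, n, n−2, S) PDA satisfies S ≥ n+2; hence S(n²/2, n, n−2) = n+2. -/

import Mathlib

/-- A `(K, F, Z, S)` placement delivery array: an `F × K` array over `[0,S) ∪ {*}`
(star encoded as `none`) such that each column contains exactly `Z` stars, every
integer in `[0,S)` appears, and any two equal integer entries lie in distinct rows
and distinct columns with stars at the two crossing positions. -/
def IsPDA (K F Z S : ℕ) (P : Fin F → Fin K → Option ℕ) : Prop :=
  (∀ j, (Finset.univ.filter fun i => P i j = none).card = Z) ∧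
  (∀ i j s, P i j = some s → s < S) ∧
  (∀ s, s < S → ∃ i j, P i j = some s) ∧
  (∀ i₁ j₁ i₂ j₂ s, P i₁ j₁ = some s → P i₂ j₂ = some s → (i₁ ≠ i₂ ∨ j₁ ≠ j₂) →
    i₁ ≠ i₂ ∧ j₁ ≠ j₂ ∧ P i₁ j₂ = none ∧ P i₂ j₁ = none)

/-- `minS K F Z` is the minimum `S` for which a `(K, F, Z, S)` PDA exists. -/
noncomputable def minS (K F Z : ℕ) : ℕ :=
  sInf {S | ∃ P : Fin F → Fin K → Option ℕ, IsPDA K F Z S P}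

abbrev PairT (n : ℕ) := {p : Fin n × Fin n // p.1 < p.2}
abbrev ColT (n : ℕ) := PairT n ⊕ Fin (n / 2)

def Q (n : ℕ) (i : Fin n) : ColT n → Option ℕ
  | .inl p => if i = p.1.1 then some p.1.2 else if i = p.1.2 then some p.1.1 else none
  | .inr k => if (i : ℕ) = 2 * k then some n else if (i : ℕ) = 2 * k + 1 then some (n + 1)
      else none

lemma Q_inl_some {n : ℕ} {i : Fin n} {p : PairT n} {s : ℕ} :
    Q n i (Sum.inl p) = some s ↔ (i = p.1.1 ∧ s = p.1.2) ∨ (i = p.1.2 ∧ s = p.1.1) := by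
  have hab : p.1.1 ≠ p.1.2 := ne_of_lt p.2
  by_cases h1 : i = p.1.1 <;> by_cases h2 : i = p.1.2 <;>
    simp_all [Q, eq_comm]

lemma Q_inl_none {n : ℕ} {i : Fin n} {p : PairT n} :
    Q n i (Sum.inl p) = none ↔ i ≠ p.1.1 ∧ i ≠ p.1.2 := by
  by_cases h1 : i = p.1.1 <;> by_cases h2 : i = p.1.2 <;> simp_all [Q]

lemma Q_inr_some {n : ℕ} {i : Fin n} {k : Fin (n / 2)} {s : ℕ} :
    Q n i (Sum.inr k) = some s ↔
      ((i : ℕ) = 2 * k ∧ s = n) ∨ ((i : ℕ) = 2 * k + 1 ∧ s = n + 1) := by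
  by_cases h1 : (i : ℕ) = 2 * k <;> by_cases h2 : (i : ℕ) = 2 * k + 1 <;>
    simp_all [Q, eq_comm]

lemma Q_inr_none {n : ℕ} {i : Fin n} {k : Fin (n / 2)} :
    Q n i (Sum.inr k) = none ↔ (i : ℕ) ≠ 2 * k ∧ (i : ℕ) ≠ 2 * k + 1 := by
  by_cases h1 : (i : ℕ) = 2 * k <;> by_cases h2 : (i : ℕ) = 2 * k + 1 <;> simp_all [Q]

lemma Q_star_count {n : ℕ} (hn : 2 ≤ n) (he : Even n) (c : ColT n) :
    (Finset.univ.filter fun i => Q n i c = none).card = n - 2 := by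
  obtain ⟨c⟩ | ⟨k⟩ := c
  · have hab : c.1.1 ≠ c.1.2 := ne_of_lt c.2
    have : (Finset.univ.filter fun i => Q n i (Sum.inl c) = none)
        = Finset.univ \ {c.1.1, c.1.2} := by
      ext i; simp [Q_inl_none]
    rw [this, Finset.card_sdiff_of_subset (by simp), Finset.card_univ, Finset.card_pair hab,
      Fintype.card_fin]
  · have h2k : 2 * (k : ℕ) + 1 < n := by
      have := k.2; omega
    set a : Fin n := ⟨2 * k, by omega⟩
    set b : Fin n := ⟨2 * k + 1, h2k⟩
    have : (Finset.univ.filter fun i => Q n i (Sum.inr k) = none)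
        = Finset.univ \ {a, b} := by
      ext i
      simp only [Finset.mem_filter, Finset.mem_univ, true_and, Q_inr_none,
        Finset.mem_sdiff, Finset.mem_insert, Finset.mem_singleton, Fin.ext_iff, a, b, Fin.val_mk]
      omega
    rw [this, Finset.card_sdiff_of_subset (by simp), Finset.card_univ,
      Finset.card_pair (by simp [a, b, Fin.ext_iff]), Fintype.card_fin]

lemma Q_bound {n : ℕ} (i : Fin n) (c : ColT n) (s : ℕ) (h : Q n i c = some s) :
    s < n + 2 := by
  obtain ⟨c⟩ | ⟨k⟩ := c
  · rcases Q_inl_some.mp h with ⟨_, rfl⟩ | ⟨_, rfl⟩ <;> omega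
  · rcases Q_inr_some.mp h with ⟨_, rfl⟩ | ⟨_, rfl⟩ <;> omega

lemma Q_surj {n : ℕ} (hn : 2 ≤ n) (s : ℕ) (hs : s < n + 2) :
    ∃ i c, Q n i c = some s := by
  have hhalf : 0 < n / 2 := by omega
  rcases lt_or_ge s n with h | h
  · rcases Nat.eq_zero_or_pos s with rfl | hpos
    · exact ⟨⟨1, by omega⟩, Sum.inl ⟨(⟨0, by omega⟩, ⟨1, by omega⟩), by simp [Fin.lt_def]⟩,
        Q_inl_some.mpr (Or.inr ⟨rfl, rfl⟩)⟩
    · exact ⟨⟨0, by omega⟩, Sum.inl ⟨(⟨0, by omega⟩, ⟨s, h⟩), by simp [Fin.lt_def, hpos]⟩,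
        Q_inl_some.mpr (Or.inl ⟨rfl, rfl⟩)⟩
  · rcases (by omega : s = n ∨ s = n + 1) with rfl | rfl
    · exact ⟨⟨0, by omega⟩, Sum.inr ⟨0, hhalf⟩, Q_inr_some.mpr (Or.inl ⟨by simp, rfl⟩)⟩
    · exact ⟨⟨1, by omega⟩, Sum.inr ⟨0, hhalf⟩, Q_inr_some.mpr (Or.inr ⟨by simp, rfl⟩)⟩

lemma Q_inl_some' {n : ℕ} {i : Fin n} {p : PairT n} {s : ℕ} :
    Q n i (Sum.inl p) = some s ↔
      ((p.1.1 : ℕ) = min (i : ℕ) s ∧ (p.1.2 : ℕ) = max (i : ℕ) s ∧ (i : ℕ) ≠ s) := by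
  have hab : (p.1.1 : ℕ) < p.1.2 := p.2
  rw [Q_inl_some]
  constructor
  · rintro (⟨rfl, rfl⟩ | ⟨rfl, rfl⟩) <;> omega
  · rintro ⟨h1, h2, h3⟩
    rcases lt_or_gt_of_ne h3 with h | h
    · left; exact ⟨Fin.ext (by omega), by omega⟩
    · right; exact ⟨Fin.ext (by omega), by omega⟩

lemma Q_cross {n : ℕ} (i₁ i₂ : Fin n) (c₁ c₂ : ColT n) (s : ℕ)
    (h1 : Q n i₁ c₁ = some s) (h2 : Q n i₂ c₂ = some s) (hne : i₁ ≠ i₂ ∨ c₁ ≠ c₂) :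
    i₁ ≠ i₂ ∧ c₁ ≠ c₂ ∧ Q n i₁ c₂ = none ∧ Q n i₂ c₁ = none := by
  obtain ⟨p⟩ | ⟨k₁⟩ := c₁ <;> obtain ⟨q⟩ | ⟨k₂⟩ := c₂
  · rw [Q_inl_some'] at h1 h2
    obtain ⟨hp1, hp2, hps⟩ := h1
    obtain ⟨hq1, hq2, hqs⟩ := h2
    have hi : (i₁ : ℕ) ≠ (i₂ : ℕ) := by
      intro h
      have hpq : p = q := Subtype.ext (Prod.ext (Fin.ext (by omega)) (Fin.ext (by omega)))
      rcases hne with h' | h'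
      · exact h' (Fin.ext h)
      · exact h' (by rw [hpq])
    refine ⟨fun h => hi (congrArg Fin.val h), ?_, ?_, ?_⟩
    · intro h
      rw [Sum.inl.injEq] at h
      subst h
      omega
    · rw [Q_inl_none]
      constructor <;> intro h <;> apply_fun Fin.val at h <;> omega
    · rw [Q_inl_none]
      constructor <;> intro h <;> apply_fun Fin.val at h <;> omega
  · exfalso
    rw [Q_inl_some'] at h1
    obtain ⟨hp1, hp2, hps⟩ := h1
    have := p.1.2.isLt
    rcases Q_inr_some.mp h2 with ⟨_, h⟩ | ⟨_, h⟩ <;> omega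
  · exfalso
    rw [Q_inl_some'] at h2
    obtain ⟨hq1, hq2, hqs⟩ := h2
    have := q.1.2.isLt
    rcases Q_inr_some.mp h1 with ⟨_, h⟩ | ⟨_, h⟩ <;> omega
  · rcases Q_inr_some.mp h1 with ⟨ha1, hs1⟩ | ⟨ha1, hs1⟩ <;>
      rcases Q_inr_some.mp h2 with ⟨ha2, hs2⟩ | ⟨ha2, hs2⟩
    all_goals try (exfalso; omega)
    all_goals
      have hk : (k₁ : ℕ) ≠ (k₂ : ℕ) := by
        intro h
        rcases hne with h' | h'
        · exact h' (Fin.ext (by omega))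
        · exact h' (by rw [show k₁ = k₂ from Fin.ext h])
    all_goals
      refine ⟨fun h => hk ?_, fun h => ?_, ?_, ?_⟩
      case' _ => apply_fun Fin.val at h; omega
      case' _ => rw [Sum.inr.injEq] at h; exact hk (congrArg Fin.val h)
      case' _ => rw [Q_inr_none]; omega
      case' _ => rw [Q_inr_none]; omega

lemma card_colT {n : ℕ} (hn : 2 ≤ n) (he : Even n) :
    Fintype.card (ColT n) = n ^ 2 / 2 := by
  obtain ⟨m, rfl⟩ := he
  obtain ⟨m', rfl⟩ : ∃ m', m = m' + 1 := ⟨m - 1, by omega⟩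
  set n := m' + 1 + (m' + 1) with hn'
  have e : PairT n ≃ Σ b : Fin n, {a : Fin n // a < b} :=
    { toFun := fun p => ⟨p.1.2, p.1.1, p.2⟩
      invFun := fun x => ⟨(x.2.1, x.1), x.2.2⟩
      left_inv := fun p => rfl
      right_inv := fun x => rfl }
  have hcardsub : ∀ b : Fin n, Fintype.card {a : Fin n // a < b} = (b : ℕ) := by
    intro b
    rw [Fintype.card_subtype]
    rw [show Finset.univ.filter (fun a => a < b) = Finset.Iio b by ext a; simp]
    exact Fin.card_Iio b
  have hpair : Fintype.card (PairT n) = ∑ i ∈ Finset.range n, i := by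
    rw [Fintype.card_congr e, Fintype.card_sigma]
    rw [← Fin.sum_univ_eq_sum_range (fun i => i) n]
    exact Finset.sum_congr rfl fun b _ => hcardsub b
  have hX : (∑ i ∈ Finset.range n, i) = (m' + 1) * (2 * m' + 1) := by
    have h2 := Finset.sum_range_id_mul_two n
    have e1 : n - 1 = 2 * m' + 1 := by omega
    rw [e1] at h2
    have e2 : n * (2 * m' + 1) = ((m' + 1) * (2 * m' + 1)) * 2 := by rw [hn']; ring
    exact Nat.eq_of_mul_eq_mul_right (by norm_num) (h2.trans e2)
  rw [Fintype.card_sum, hpair, hX, Fintype.card_fin]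
  rw [show n ^ 2 = (2 * (m' + 1) ^ 2) * 2 from by rw [hn']; ring,
    Nat.mul_div_cancel _ (by norm_num),
    show n = (m' + 1) * 2 from by rw [hn']; ring,
    Nat.mul_div_cancel _ (by norm_num)]
  ring

lemma exists_pda {n : ℕ} (hn : 2 ≤ n) (he : Even n) :
    ∃ P : Fin n → Fin (n ^ 2 / 2) → Option ℕ, IsPDA (n ^ 2 / 2) n (n - 2) (n + 2) P := by
  have e : ColT n ≃ Fin (n ^ 2 / 2) := Fintype.equivFinOfCardEq (card_colT hn he)
  refine ⟨fun i j => Q n i (e.symm j), ?_, ?_, ?_, ?_⟩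
  · intro j; exact Q_star_count hn he _
  · intro i j s h; exact Q_bound _ _ _ h
  · intro s hs; obtain ⟨i, c, h⟩ := Q_surj hn s hs; exact ⟨i, e c, by simp [h]⟩
  · intro i₁ j₁ i₂ j₂ s h1 h2 hne
    have key := Q_cross i₁ i₂ (e.symm j₁) (e.symm j₂) s h1 h2 ?_
    · exact ⟨key.1, fun h => key.2.1 (by rw [h]), key.2.2.1, key.2.2.2⟩
    · rcases hne with h | h
      · exact Or.inl h
      · exact Or.inr fun hc => h (by simpa using congrArg e hc)

lemma pda_lower {n S : ℕ} (hn : 2 ≤ n) (he : Even n)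
    (P : Fin n → Fin (n ^ 2 / 2) → Option ℕ)
    (h : IsPDA (n ^ 2 / 2) n (n - 2) S P) : n + 2 ≤ S := by
  obtain ⟨h1, h2, h3, h4⟩ := h
  have hcol : ∀ j : Fin (n ^ 2 / 2), (Finset.univ.filter fun i => ¬ P i j = none).card = 2 := by
    intro j
    have hh := Finset.card_filter_add_card_filter_not (s := (Finset.univ : Finset (Fin n)))
      (p := fun i => P i j = none)
    rw [h1 j, Finset.card_univ, Fintype.card_fin] at hh
    omega
  set T : Finset (Fin n × Fin (n ^ 2 / 2)) := Finset.univ.filter fun p => ¬ P p.1 p.2 = none with hT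
  have hfib : ∀ j : Fin (n ^ 2 / 2), (T.filter fun p => p.2 = j).card = 2 := by
    intro j
    refine Eq.trans ?_ (hcol j)
    apply Finset.card_bij' (fun p _ => p.1) (fun i _ => (i, j))
    · intro p hp
      simp only [hT, Finset.mem_filter, Finset.mem_univ, true_and] at hp ⊢
      rw [← hp.2]; exact hp.1
    · intro p hp
      simp only [hT, Finset.mem_filter, Finset.mem_univ, true_and] at hp
      exact Prod.ext rfl hp.2.symm
    · intro i hi
      rfl
    · intro i hi
      simp only [hT, Finset.mem_filter, Finset.mem_univ, true_and] at hi ⊢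
      exact ⟨hi, trivial⟩
  have hTcard : T.card = 2 * (n ^ 2 / 2) := by
    rw [Finset.card_eq_sum_card_fiberwise (f := Prod.snd) (t := Finset.univ)
      (fun p _ => Finset.mem_univ _)]
    rw [Finset.sum_congr rfl fun j _ => hfib j, Finset.sum_const, Finset.card_univ,
      Fintype.card_fin, smul_eq_mul]
    ring
  have hsym : ∀ s : ℕ, (T.filter fun p => P p.1 p.2 = some s).card ≤ n - 1 := by
    intro s
    set A := T.filter fun p => P p.1 p.2 = some s with hA
    have hmemA : ∀ p ∈ A, P p.1 p.2 = some s := fun p hp => (Finset.mem_filter.mp hp).2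
    rcases Finset.eq_empty_or_nonempty A with hAe | ⟨p₀, hp₀⟩
    · rw [hAe]; simp
    · have hmap : ∀ p ∈ A.erase p₀, p.1 ∈ Finset.univ.filter fun i => P i p₀.2 = none := by
        intro p hp
        obtain ⟨hpne, hpA⟩ := Finset.mem_erase.mp hp
        have key := h4 p.1 p.2 p₀.1 p₀.2 s (hmemA p hpA) (hmemA p₀ hp₀) ?_
        · simp [key.2.2.1]
        · by_contra hcon
          push_neg at hcon
          exact hpne (Prod.ext hcon.1 hcon.2)
      have hinj : Set.InjOn Prod.fst ((A.erase p₀ : Finset _) : Set (Fin n × Fin (n ^ 2 / 2))) := by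
        intro p hp q hq hpq
        simp only [Finset.coe_erase, Set.mem_diff, Finset.mem_coe] at hp hq
        by_contra hne
        have key := h4 p.1 p.2 q.1 q.2 s (hmemA p hp.1) (hmemA q hq.1) ?_
        · exact key.1 hpq
        · by_contra hcon
          push_neg at hcon
          exact hne (Prod.ext hcon.1 hcon.2)
      have hle := Finset.card_le_card_of_injOn Prod.fst hmap hinj
      rw [h1 p₀.2] at hle
      have hcA : (A.erase p₀).card = A.card - 1 := Finset.card_erase_of_mem hp₀
      have hpos : 1 ≤ A.card := Finset.card_pos.mpr ⟨p₀, hp₀⟩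
      omega
  have hfiber2 : T.card = ∑ s ∈ Finset.range S,
      (T.filter fun p => (P p.1 p.2).getD 0 = s).card := by
    apply Finset.card_eq_sum_card_fiberwise
    intro p hp
    simp only [Finset.mem_coe, hT, Finset.mem_filter, Finset.mem_univ, true_and] at hp
    obtain ⟨v, hv⟩ := Option.ne_none_iff_exists'.mp hp
    simp only [hv]
    simpa using h2 _ _ _ hv
  have hfeq : ∀ s, (T.filter fun p => (P p.1 p.2).getD 0 = s)
      = T.filter fun p => P p.1 p.2 = some s := by
    intro s
    apply Finset.filter_congr
    intro p hp
    simp only [hT, Finset.mem_filter, Finset.mem_univ, true_and] at hp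
    obtain ⟨v, hv⟩ := Option.ne_none_iff_exists'.mp hp
    simp [hv]
  have hsum : 2 * (n ^ 2 / 2) ≤ S * (n - 1) := by
    calc 2 * (n ^ 2 / 2) = T.card := hTcard.symm
    _ = ∑ s ∈ Finset.range S, (T.filter fun p => (P p.1 p.2).getD 0 = s).card := hfiber2
    _ = ∑ s ∈ Finset.range S, (T.filter fun p => P p.1 p.2 = some s).card :=
        Finset.sum_congr rfl fun s _ => by rw [hfeq]
    _ ≤ ∑ s ∈ Finset.range S, (n - 1) := Finset.sum_le_sum fun s _ => hsym s
    _ = S * (n - 1) := by rw [Finset.sum_const, Finset.card_range, smul_eq_mul]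
  have h2K : 2 * (n ^ 2 / 2) = n * n := by
    obtain ⟨m, rfl⟩ := he
    rw [sq, show (m + m) * (m + m) = (m * (m + m)) * 2 from by ring,
      Nat.mul_div_cancel _ two_pos]
    ring
  obtain ⟨m', rfl⟩ : ∃ m', n = m' + 2 := ⟨n - 2, by omega⟩
  rw [h2K] at hsum
  rw [show m' + 2 - 1 = m' + 1 from rfl] at hsum
  by_contra hcon
  push_neg at hcon
  have hS : S ≤ m' + 3 := by omega
  have := Nat.mul_le_mul_right (m' + 1) hS
  nlinarith [hsum, this]

/-- for n a positive even integer, a (n²/2, n, n−2, n+2) PDA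
exists, every (n²/2, n, n−2, S) PDA has S ≥ n+2, and hence
S(n²/2, n, n−2) = n+2. -/
theorem stmt18 (n : ℕ) (hn : 0 < n) (he : Even n) :
    (∃ P : Fin n → Fin (n ^ 2 / 2) → Option ℕ, IsPDA (n ^ 2 / 2) n (n - 2) (n + 2) P) ∧
    (∀ S : ℕ, ∀ P : Fin n → Fin (n ^ 2 / 2) → Option ℕ,
      IsPDA (n ^ 2 / 2) n (n - 2) S P → n + 2 ≤ S) ∧
    minS (n ^ 2 / 2) n (n - 2) = n + 2 := by
  have hn2 : 2 ≤ n := by obtain ⟨m, rfl⟩ := he; omega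
  obtain ⟨P, hP⟩ := exists_pda hn2 he
  refine ⟨⟨P, hP⟩, fun S P' hP' => pda_lower hn2 he P' hP', ?_⟩
  unfold minS
  apply le_antisymm
  · exact Nat.sInf_le ⟨P, hP⟩
  · exact le_csInf ⟨n + 2, P, hP⟩ fun S hS => by
      obtain ⟨P', hP'⟩ := hS; exact pda_lower hn2 he P' hP'
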